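/- Let n ≥ 1 and m ≥ 1 be integers, let A be an invertible n×n complex matrix, let σ : {1,…,m} → ℤ, and let τ be a permutation of {1,…,m}. Then Σ_{i : {1,…,m} → {1,…,n}} Π_{l=1}^{m} (A^{σ(l)})_{i(l), i(τ(l))} = Π_{o ∈ Orb(τ)} Tr( A^{Σ_{l ∈ o} σ(l)} ), where Orb(τ) denotes the set of orbits of τ on {1,…,m}, the sum on the left is over all functions i from {1,…,m} to {1,…,n}, and integer powers A^k for k ∈ ℤ are defined since A is invertible. -/

import Mathlib

open scoped Classical

/-- The forward orbit of `x` under `f`, as a finset. When `f` is a bijection this is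
exactly the orbit of `x` under repeated application of `f`. -/
noncomputable def fwdOrbit {N : ℕ} (f : Fin N → Fin N) (x : Fin N) : Finset (Fin N) :=
  Finset.univ.filter (fun y => ∃ k : ℕ, f^[k] x = y)

open Finset Equiv Equiv.Perm

open scoped Classical
open Finset Equiv Equiv.Perm


lemma cycle_sum (n : ℕ) (A : Matrix (Fin n) (Fin n) ℂ) (hA : IsUnit A.det) :
    ∀ (k : ℕ) (β : Type) [Fintype β] [DecidableEq β], Fintype.card β = k →
    ∀ (π : Equiv.Perm β) (σ : β → ℤ), (∀ x y : β, π.SameCycle x y) → Nonempty β →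
    ∑ g : β → Fin n, ∏ l, (A ^ σ l) (g l) (g (π l)) = (A ^ (∑ l, σ l)).trace := by
  intro k
  induction k using Nat.strong_induction_on with
  | _ k IH =>
  intro β _ _ hcard π σ htrans hne
  by_cases h1 : Fintype.card β = 1
  · -- singleton case
    obtain ⟨x₀, hx₀⟩ := Fintype.card_eq_one_iff.mp h1
    haveI : Subsingleton β := Fintype.card_le_one_iff_subsingleton.mp (le_of_eq h1)
    haveI : Unique β := uniqueOfSubsingleton x₀
    have hsum : (∑ l : β, σ l) = σ x₀ := by
      rw [Fintype.sum_unique]; exact congrArg σ (Subsingleton.elim _ _)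
    have hprod : ∀ g : β → Fin n, (∏ l, (A ^ σ l) (g l) (g (π l))) =
        (A ^ σ x₀) (g x₀) (g x₀) := by
      intro g
      rw [Fintype.prod_unique, hx₀ (π default), hx₀ default]
    simp_rw [hprod, hsum]
    rw [Matrix.trace]
    refine Fintype.sum_bijective (Equiv.funUnique β (Fin n)) (Equiv.bijective _) _ _ ?_
    intro g
    simp only [Matrix.diag, Equiv.funUnique_apply]
    rw [hx₀ default]
  · -- card ≥ 2
    have hβ2 : 2 ≤ Fintype.card β := by
      have := Fintype.card_pos_iff.mpr hne
      omega
    have hπfix : ∀ y : β, π y ≠ y := by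
      intro y hy
      have hall : ∀ z : β, z = y := by
        intro z
        obtain ⟨i, hi⟩ := htrans y z
        rw [← hi, Equiv.Perm.zpow_apply_eq_self_of_apply_eq_self hy]
      have : Fintype.card β ≤ 1 :=
        Fintype.card_le_one_iff.mpr (fun a b => (hall a).trans (hall b).symm)
      omega
    obtain ⟨x₀⟩ := hne
    have hπx₀ : π x₀ ≠ x₀ := hπfix x₀
    have hπinvx₀ : π⁻¹ x₀ ≠ x₀ := by
      intro h
      exact hπx₀ (by conv_lhs => rw [← h, ← Equiv.Perm.mul_apply, mul_inv_cancel, Equiv.Perm.one_apply])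
    set δ : Equiv.Perm β := (Equiv.swap x₀ (π x₀)) * π with hδdef
    have hδx₀ : δ x₀ = x₀ := by
      simp [hδdef, Equiv.Perm.mul_apply, Equiv.swap_apply_right]
    have hδmem : ∀ y : β, y ≠ x₀ ↔ δ y ≠ x₀ := by
      intro y
      constructor
      · intro h hc
        exact h (δ.injective (hc.trans hδx₀.symm))
      · intro h hc
        exact h (by rw [hc, hδx₀])
    have hδ1 : δ (π⁻¹ x₀) = π x₀ := by
      simp [hδdef, Equiv.Perm.mul_apply, Equiv.swap_apply_left]
    have hδ2 : ∀ y : β, y ≠ x₀ → y ≠ π⁻¹ x₀ → δ y = π y := by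
      intro y hy1 hy2
      have h1 : π y ≠ x₀ := fun h => hy2 (by rw [← h, ← Equiv.Perm.mul_apply, inv_mul_cancel, Equiv.Perm.one_apply])
      have h2 : π y ≠ π x₀ := fun h => hy1 (π.injective h)
      simp [hδdef, Equiv.Perm.mul_apply, Equiv.swap_apply_of_ne_of_ne h1 h2]
    set β' := {y : β // y ≠ x₀} with hβ'def
    set π' : Equiv.Perm β' := δ.subtypePerm (fun y => (hδmem y).symm) with hπ'def
    set σ' : β' → ℤ := fun y => if (y : β) = π⁻¹ x₀ then σ y + σ x₀ else σ y with hσ'def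
    have hcard' : Fintype.card β' = k - 1 := by
      have h := Fintype.card_subtype_compl (fun y : β => y = x₀)
      rw [Fintype.card_subtype_eq] at h
      rw [hcard] at h
      exact h
    have htrans' : ∀ y z : β', π'.SameCycle y z := by
      rcases lt_or_ge (Fintype.card β) 3 with h3 | h3
      · have hc1 : Fintype.card β' = 1 := by omega
        haveI : Subsingleton β' := Fintype.card_le_one_iff_subsingleton.mp (le_of_eq hc1)
        intro y z
        rw [Subsingleton.elim y z]
      · have hππx₀ : π (π x₀) ≠ x₀ := by
          intro h
          have hall : ∀ z : β, z = x₀ ∨ z = π x₀ := by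
            intro z
            obtain ⟨i, hi⟩ := htrans x₀ z
            rcases Equiv.Perm.zpow_apply_eq_of_apply_apply_eq_self h i with h' | h'
            · exact Or.inl (by rw [← hi, h'])
            · exact Or.inr (by rw [← hi, h'])
          have hsub : (Finset.univ : Finset β) ⊆ {x₀, π x₀} := by
            intro z _
            rcases hall z with h | h <;> simp [h]
          have hle := Finset.card_le_card hsub
          have h2 : ({x₀, π x₀} : Finset β).card ≤ 2 := Finset.card_insert_le _ _ |>.trans (by simp)
          rw [Finset.card_univ] at hle
          omega
        have hcycπ : π.IsCycle := ⟨x₀, hπx₀, fun y _ => htrans x₀ y⟩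
        have hcycδ : δ.IsCycle := hcycπ.swap_mul hπx₀ hππx₀
        have hδfix : ∀ y : β, y ≠ x₀ → δ y ≠ y := by
          intro y hy h
          by_cases hc : y = π⁻¹ x₀
          · subst hc
            rw [hδ1] at h
            exact hππx₀ (by rw [h, ← Equiv.Perm.mul_apply, mul_inv_cancel, Equiv.Perm.one_apply])
          · rw [hδ2 y hy hc] at h
            exact hπfix y h
        obtain ⟨b, hb, hbc⟩ := hcycδ
        intro y z
        obtain ⟨i, hi⟩ := ((hbc (hδfix _ y.2)).symm.trans (hbc (hδfix _ z.2)) : δ.SameCycle ↑y ↑z)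
        refine ⟨i, ?_⟩
        rw [hπ'def, Equiv.Perm.subtypePerm_zpow]
        exact Subtype.ext hi
    have hne' : Nonempty β' := ⟨⟨π x₀, hπx₀⟩⟩
    have hk1 : k - 1 < k := by omega
    have key := IH (k - 1) hk1 β' hcard' π' σ' htrans' hne'
    -- sum of σ' equals sum of σ
    have hσsum : (∑ l : β', σ' l) = ∑ l : β, σ l := by
      have e1 : (∑ l : β', σ' l)
          = ∑ l ∈ Finset.univ.erase x₀, (if l = π⁻¹ x₀ then σ l + σ x₀ else σ l) :=
        (Finset.sum_subtype (Finset.univ.erase x₀) (fun x => by simp)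
          (fun l => if l = π⁻¹ x₀ then σ l + σ x₀ else σ l)).symm
      rw [e1]
      have h2 : ∀ l, (if l = π⁻¹ x₀ then σ l + σ x₀ else σ l)
          = σ l + (if l = π⁻¹ x₀ then σ x₀ else 0) := by
        intro l; split <;> simp
      simp_rw [h2, Finset.sum_add_distrib]
      rw [Finset.sum_ite_eq' (Finset.univ.erase x₀) (π⁻¹ x₀) (fun _ => σ x₀)]
      rw [if_pos (by simpa using hπinvx₀)]
      rw [Finset.sum_erase_add _ _ (Finset.mem_univ x₀)]
    rw [← hσsum, ← key]
    -- reindex the sum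
    rw [← Equiv.sum_comp (Equiv.funSplitAt x₀ (Fin n)).symm
      (fun g => ∏ l, (A ^ σ l) (g l) (g (π l))), Fintype.sum_prod_type, Finset.sum_comm]
    refine Finset.sum_congr rfl ?_
    intro g' _
    set G : Fin n → β → Fin n := fun a => (Equiv.funSplitAt x₀ (Fin n)).symm (a, g') with hGdef
    have hGx₀ : ∀ a, G a x₀ = a := by intro a; simp [hGdef]
    have hGy : ∀ (a : Fin n) (y : β) (h : y ≠ x₀), G a y = g' ⟨y, h⟩ := by
      intro a y h; simp [hGdef, h]
    set gb : β → Fin n := fun y => if h : y = x₀ then g' ⟨π x₀, hπx₀⟩ else g' ⟨y, h⟩ with hgbdef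
    have hgb : ∀ (y : β) (h : y ≠ x₀), gb y = g' ⟨y, h⟩ := by
      intro y h; simp [hgbdef, h]
    have hmem2 : π⁻¹ x₀ ∈ Finset.univ.erase x₀ := by simpa using hπinvx₀
    have hsplit : ∀ a, (∏ l : β, (A ^ σ l) (G a l) (G a (π l)))
        = (A ^ σ x₀) a (gb (π x₀)) * ((A ^ σ (π⁻¹ x₀)) (gb (π⁻¹ x₀)) a
          * ∏ l ∈ (Finset.univ.erase x₀).erase (π⁻¹ x₀), (A ^ σ l) (gb l) (gb (π l))) := by
      intro a
      rw [← Finset.mul_prod_erase Finset.univ _ (Finset.mem_univ x₀),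
        ← Finset.mul_prod_erase _ _ hmem2]
      congr 1
      · rw [hGx₀, hGy a (π x₀) hπx₀, hgb (π x₀) hπx₀]
      congr 1
      · rw [← Equiv.Perm.mul_apply, mul_inv_cancel, Equiv.Perm.one_apply, hGx₀, hGy a (π⁻¹ x₀) hπinvx₀, hgb (π⁻¹ x₀) hπinvx₀]
      refine Finset.prod_congr rfl ?_
      intro l hl
      simp only [Finset.mem_erase] at hl
      have hl1 : l ≠ π⁻¹ x₀ := hl.1
      have hl2 : l ≠ x₀ := hl.2.1
      have hπl : π l ≠ x₀ := fun h => hl1 (by rw [← h, ← Equiv.Perm.mul_apply, inv_mul_cancel, Equiv.Perm.one_apply])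
      rw [hGy a l hl2, hGy a (π l) hπl, hgb l hl2, hgb (π l) hπl]
    simp_rw [hGdef] at hsplit
    simp_rw [hsplit, ← mul_assoc]
    rw [← Finset.sum_mul]
    have hcollapse : (∑ a : Fin n, (A ^ σ x₀) a (gb (π x₀)) * (A ^ σ (π⁻¹ x₀)) (gb (π⁻¹ x₀)) a)
        = (A ^ (σ (π⁻¹ x₀) + σ x₀)) (gb (π⁻¹ x₀)) (gb (π x₀)) := by
      rw [Matrix.zpow_add hA, Matrix.mul_apply]
      exact Finset.sum_congr rfl (fun a _ => mul_comm _ _)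
    rw [hcollapse]
    set F : β → ℂ := fun l =>
      (A ^ (if l = π⁻¹ x₀ then σ l + σ x₀ else σ l)) (gb l) (gb (δ l)) with hFdef
    have hstep : ∏ l : β', (A ^ σ' l) (g' l) (g' (π' l)) = ∏ l : β', F ↑l := by
      refine Finset.prod_congr rfl ?_
      intro l _
      have h1 : g' l = gb ↑l := by rw [hgb ↑l l.2]
      have h2 : g' (π' l) = gb (δ ↑l) := by
        rw [hgb (δ ↑l) ((hδmem _).mp l.2)]
        rfl
      rw [h1, h2, hFdef]
    rw [hstep, ← Finset.prod_subtype (Finset.univ.erase x₀) (fun x => by simp) F,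
      ← Finset.mul_prod_erase _ F hmem2]
    have hF1 : F (π⁻¹ x₀) = (A ^ (σ (π⁻¹ x₀) + σ x₀)) (gb (π⁻¹ x₀)) (gb (π x₀)) := by
      simp only [hFdef, hδ1, eq_self_iff_true, ↓reduceIte]
    rw [hF1]
    congr 1
    refine Finset.prod_congr rfl ?_
    intro l hl
    simp only [Finset.mem_erase] at hl
    rw [hFdef]
    simp only [if_neg hl.1, hδ2 l hl.2.1 hl.1]


lemma factor_sum {α : Type} [Fintype α] [DecidableEq α] {n : ℕ} (b₀ : Fin n)
    (G : (o : Finset α) → (({x // x ∈ o} → Fin n) → ℂ)) :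
    ∀ (O : Finset (Finset α)), (↑O : Set (Finset α)).PairwiseDisjoint id →
    ∑ i ∈ Finset.univ.filter (fun i : α → Fin n => ∀ x, x ∉ O.biUnion id → i x = b₀),
        ∏ o ∈ O, G o (fun x => i ↑x)
      = ∏ o ∈ O, ∑ g : {x // x ∈ o} → Fin n, G o g := by
  intro O
  induction O using Finset.induction_on with
  | empty =>
    intro _
    have hfil : Finset.univ.filter
        (fun i : α → Fin n => ∀ x, x ∉ (∅ : Finset (Finset α)).biUnion id → i x = b₀)
        = {fun _ => b₀} := by
      ext i
      simp [funext_iff]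
    rw [hfil]
    simp
  | @insert o O' ho IHO =>
    intro hdisj
    have hdisj' : (↑O' : Set (Finset α)).PairwiseDisjoint id :=
      hdisj.subset (by intro x hx; simp [hx])
    have hd : ∀ o' ∈ O', Disjoint o o' := by
      intro o' ho'
      exact hdisj (by simp) (by simp [ho']) (fun h => ho (h ▸ ho'))
    rw [Finset.prod_insert ho, ← IHO hdisj', Finset.sum_mul_sum, ← Finset.sum_product']
    refine Finset.sum_bij'
      (fun i _ => ((fun x : {x // x ∈ o} => i ↑x), fun x => if x ∈ o then b₀ else i x))
      (fun p _ => fun x => if h : x ∈ o then p.1 ⟨x, h⟩ else p.2 x) ?_ ?_ ?_ ?_ ?_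
    · -- maps into product set
      intro i hi
      simp only [Finset.mem_filter, Finset.mem_univ, true_and] at hi
      simp only [Finset.mem_product, Finset.mem_univ, true_and, Finset.mem_filter]
      intro x hx
      by_cases hxo : x ∈ o
      · simp [hxo]
      · simp only [if_neg hxo]
        refine hi x ?_
        simp only [Finset.mem_biUnion, id] at hx ⊢
        rintro ⟨t, ht, hxt⟩
        rcases Finset.mem_insert.mp ht with rfl | ht'
        · exact hxo hxt
        · exact hx ⟨t, ht', hxt⟩
    · -- reverse map into filter set
      intro p hp
      simp only [Finset.mem_product, Finset.mem_filter, Finset.mem_univ, true_and] at hp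
      simp only [Finset.mem_filter, Finset.mem_univ, true_and]
      intro x hx
      have hxo : x ∉ o := by
        intro hxo
        exact hx (Finset.mem_biUnion.mpr ⟨o, Finset.mem_insert_self o O', hxo⟩)
      rw [dif_neg hxo]
      refine hp x ?_
      intro hx'
      obtain ⟨t, ht, hxt⟩ := Finset.mem_biUnion.mp hx'
      exact hx (Finset.mem_biUnion.mpr ⟨t, Finset.mem_insert_of_mem ht, hxt⟩)
    · -- left inverse
      intro i hi
      simp only [Finset.mem_filter, Finset.mem_univ, true_and] at hi
      funext x
      by_cases hxo : x ∈ o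
      · simp [hxo]
      · simp [hxo]
    · -- right inverse
      intro p hp
      simp only [Finset.mem_product, Finset.mem_filter, Finset.mem_univ, true_and] at hp
      refine Prod.ext ?_ ?_
      · funext x
        simp [x.2]
      · funext x
        by_cases hxo : x ∈ o
        · simp only [if_pos hxo]
          refine (hp x ?_).symm
          intro hx
          obtain ⟨t, ht, hxt⟩ := Finset.mem_biUnion.mp hx
          exact absurd ((hd t ht).le_bot (Finset.mem_inter.mpr ⟨hxo, hxt⟩)) (Finset.notMem_empty x)
        · simp [hxo]
    · -- values agree
      intro i hi
      simp only [Finset.mem_filter, Finset.mem_univ, true_and] at hi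
      rw [Finset.prod_insert ho]
      congr 1
      refine Finset.prod_congr rfl ?_
      intro o' ho'
      congr 1
      funext x
      have hxo : (x : α) ∉ o := fun h => absurd ((hd o' ho').le_bot (Finset.mem_inter.mpr ⟨h, x.2⟩)) (Finset.notMem_empty _)
      simp [hxo]


noncomputable def orbFinset {α : Type} [Fintype α] (τ : Equiv.Perm α) (x : α) : Finset α :=
  Finset.univ.filter (fun y => τ.SameCycle x y)

lemma mem_orbFinset {α : Type} [Fintype α] {τ : Equiv.Perm α} {x y : α} :
    y ∈ orbFinset τ x ↔ τ.SameCycle x y := by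
  simp [orbFinset]

lemma orbFinset_eq_of_sameCycle {α : Type} [Fintype α] {τ : Equiv.Perm α} {x y : α}
    (h : τ.SameCycle x y) : orbFinset τ x = orbFinset τ y := by
  ext z
  simp only [mem_orbFinset]
  exact ⟨fun hz => h.symm.trans hz, fun hz => h.trans hz⟩

lemma self_mem_orbFinset {α : Type} [Fintype α] (τ : Equiv.Perm α) (x : α) :
    x ∈ orbFinset τ x := mem_orbFinset.mpr (Equiv.Perm.SameCycle.refl τ x)

lemma apply_mem_orbFinset {α : Type} [Fintype α] {τ : Equiv.Perm α} {x y : α} :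
    y ∈ orbFinset τ x ↔ τ y ∈ orbFinset τ x := by
  simp only [mem_orbFinset]
  exact (Equiv.Perm.sameCycle_apply_right).symm

lemma fwdOrbit_eq_orbFinset {N : ℕ} (τ : Equiv.Perm (Fin N)) (x : Fin N) :
    fwdOrbit (⇑τ) x = orbFinset τ x := by
  rw [fwdOrbit]
  ext y
  simp only [Finset.mem_filter, Finset.mem_univ, true_and, mem_orbFinset]
  constructor
  · rintro ⟨k, hk⟩
    exact ⟨(k : ℤ), by rw [← hk]; simp [← Equiv.Perm.coe_pow, zpow_natCast]⟩
  · intro h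
    obtain ⟨i, hlt, hi⟩ := Equiv.Perm.SameCycle.exists_pow_eq' h
    exact ⟨i, by rw [← hi]; simp [← Equiv.Perm.coe_pow]⟩

lemma main_sum {α : Type} [Fintype α] [DecidableEq α] (n : ℕ) (hn : 1 ≤ n)
    (A : Matrix (Fin n) (Fin n) ℂ) (hA : IsUnit A.det)
    (σ : α → ℤ) (τ : Equiv.Perm α) :
    ∑ i : α → Fin n, ∏ l : α, (A ^ (σ l)) (i l) (i (τ l))
      = ∏ o ∈ Finset.univ.image (fun x : α => orbFinset τ x),
          Matrix.trace (A ^ (∑ l ∈ o, σ l)) := by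
  set O := Finset.univ.image (fun x : α => orbFinset τ x) with hO
  have hdisj : (↑O : Set (Finset α)).PairwiseDisjoint id := by
    intro o1 h1 o2 h2 hne
    simp only [hO, Finset.coe_image, Set.mem_image, Finset.mem_coe] at h1 h2
    obtain ⟨x1, _, rfl⟩ := h1
    obtain ⟨x2, _, rfl⟩ := h2
    refine Finset.disjoint_left.mpr ?_
    intro z hz1 hz2
    exact hne (orbFinset_eq_of_sameCycle (mem_orbFinset.mp hz1) |>.trans
      (orbFinset_eq_of_sameCycle (mem_orbFinset.mp hz2)).symm)
  have hcover : O.biUnion id = Finset.univ := by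
    ext x
    simp only [Finset.mem_biUnion, Finset.mem_univ, iff_true, id]
    exact ⟨orbFinset τ x, Finset.mem_image_of_mem _ (Finset.mem_univ x),
      self_mem_orbFinset τ x⟩
  have hτo : ∀ o ∈ O, ∀ y : α, y ∈ o ↔ τ y ∈ o := by
    intro o hoO y
    simp only [hO, Finset.mem_image] at hoO
    obtain ⟨x, _, rfl⟩ := hoO
    exact apply_mem_orbFinset
  set b₀ : Fin n := ⟨0, hn⟩ with hb₀
  set G : (o : Finset α) → (({x // x ∈ o} → Fin n) → ℂ) := fun o g =>
    ∏ l : {x // x ∈ o}, (A ^ σ ↑l)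
      (g l) (g (if h : τ ↑l ∈ o then ⟨τ ↑l, h⟩ else l)) with hG
  -- step 1: rewrite the LHS as the filtered sum of products over orbits
  have step1 : ∑ i : α → Fin n, ∏ l : α, (A ^ (σ l)) (i l) (i (τ l))
      = ∑ i ∈ Finset.univ.filter (fun i : α → Fin n => ∀ x, x ∉ O.biUnion id → i x = b₀),
          ∏ o ∈ O, G o (fun x => i ↑x) := by
    have hfil : Finset.univ.filter
        (fun i : α → Fin n => ∀ x, x ∉ O.biUnion id → i x = b₀) = Finset.univ := by
      ext i
      simp [hcover]
    rw [hfil]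
    refine Finset.sum_congr rfl ?_
    intro i _
    have hsplit : (∏ l : α, (A ^ (σ l)) (i l) (i (τ l)))
        = ∏ o ∈ O, ∏ l ∈ o, (A ^ (σ l)) (i l) (i (τ l)) := by
      conv_lhs => rw [← hcover]
      exact Finset.prod_biUnion hdisj
    rw [hsplit]
    refine Finset.prod_congr rfl ?_
    intro o hoO
    rw [Finset.prod_subtype o (fun x => Iff.rfl) (fun l => (A ^ (σ l)) (i l) (i (τ l))), hG]
    refine Finset.prod_congr rfl ?_
    intro l _
    have hτl : τ ↑l ∈ o := (hτo o hoO ↑l).mp l.2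
    rw [dif_pos hτl]
  rw [step1, factor_sum b₀ G O hdisj]
  refine Finset.prod_congr rfl ?_
  intro o hoO
  -- step 2: apply the single-cycle lemma on the subtype
  have hmem : ∀ y : α, y ∈ o ↔ τ y ∈ o := hτo o hoO
  set π : Equiv.Perm {x // x ∈ o} := τ.subtypePerm (fun y => (hmem y).symm) with hπ
  obtain ⟨x, _, rfl⟩ := Finset.mem_image.mp hoO
  have htrans : ∀ y z : {w // w ∈ orbFinset τ x}, π.SameCycle y z := by
    intro y z
    have h1 : τ.SameCycle ↑y ↑z :=
      ((mem_orbFinset.mp y.2).symm.trans (mem_orbFinset.mp z.2))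
    obtain ⟨i, hi⟩ := h1
    refine ⟨i, ?_⟩
    rw [hπ, Equiv.Perm.subtypePerm_zpow]
    exact Subtype.ext (by simpa using hi)
  have hne : Nonempty {w // w ∈ orbFinset τ x} := ⟨⟨x, self_mem_orbFinset τ x⟩⟩
  have key := cycle_sum n A hA (Fintype.card {w // w ∈ orbFinset τ x})
    {w // w ∈ orbFinset τ x} rfl π (fun l => σ ↑l) htrans hne
  have hGeq : ∀ g : {w // w ∈ orbFinset τ x} → Fin n,
      G (orbFinset τ x) g = ∏ l : {w // w ∈ orbFinset τ x}, (A ^ σ ↑l) (g l) (g (π l)) := by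
    intro g
    rw [hG]
    refine Finset.prod_congr rfl ?_
    intro l _
    have hτl : τ ↑l ∈ orbFinset τ x := (hmem ↑l).mp l.2
    rw [dif_pos hτl]
    rfl
  have hσeq : (∑ l : {w // w ∈ orbFinset τ x}, σ ↑l) = ∑ l ∈ orbFinset τ x, σ l :=
    (Finset.sum_subtype _ (fun x => Iff.rfl) σ).symm
  simp_rw [hGeq]
  rw [key, hσeq]


/-- For an invertible `n × n` complex matrix `A`, `σ : Fin m → ℤ` and a permutation `τ` of
`Fin m`, one has
`∑_{i : Fin m → Fin n} ∏_l (A^{σ l})_{i l, i (τ l)} = ∏_{o ∈ Orb(τ)} Tr(A^{∑_{l ∈ o} σ l})`. -/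
theorem sum_prod_zpow_entries_eq_prod_orbits_trace (n m : ℕ) (hn : 1 ≤ n) (hm : 1 ≤ m)
    (A : Matrix (Fin n) (Fin n) ℂ) (hA : IsUnit A)
    (σ : Fin m → ℤ) (τ : Equiv.Perm (Fin m)) :
    ∑ i : Fin m → Fin n, ∏ l : Fin m, (A ^ (σ l)) (i l) (i (τ l))
      = ∏ o ∈ Finset.univ.image (fun x : Fin m => fwdOrbit (⇑τ) x),
          Matrix.trace (A ^ (∑ l ∈ o, σ l)) := by
  have hAd : IsUnit A.det := (Matrix.isUnit_iff_isUnit_det A).mp hA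
  have h1 : (fun x : Fin m => fwdOrbit (⇑τ) x) = fun x => orbFinset τ x := by
    funext x
    exact fwdOrbit_eq_orbFinset τ x
  rw [h1]
  exact main_sum n hn A hAd σ τ
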